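/- Let k = F_q with q = 2^m, and C_1 the affine curve y^2 + y = a x^5 + b x^3 + c x + d over k with a ≠ 0 (counting also the point at infinity). Let R(x) = a x^4 + b x^2 + c^2 x, Q(x) = Tr(x R(x)), W the radical of the symplectic form <x,y>_R = Tr(xR(y) + yR(x)) on k, and V = {x ∈ W : Q(x) = 0}. Then: if V ≠ W, the number of points of C_1 over k equals 1 + q; if V = W, then #C_1(k) = 1 + q ± √(2^w q) where w = dim_{F_2} W. -/

import Mathlib

open Finset
open scoped Classical

noncomputable section VdGVVAux

def chi (t : ZMod 2) : ℤ := if t = 0 then 1 else -1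

lemma chi_add (s t : ZMod 2) : chi (s + t) = chi s * chi t := by revert s t; decide

lemma chi_zero : chi 0 = 1 := rfl

lemma zmod2_cases (t : ZMod 2) : t = 0 ∨ t = 1 := by revert t; decide

lemma zmod2_ne_zero {t : ZMod 2} (h : t ≠ 0) : t = 1 := (zmod2_cases t).resolve_left h

/-- Shift trick: an additive surjection onto `ZMod 2` has vanishing character sum. -/
lemma sum_chi_shift {G : Type*} [AddCommGroup G] [Fintype G] (L : G → ZMod 2)
    (hL : ∀ x y, L (x + y) = L x + L y) (x₁ : G) (h1 : L x₁ = 1) :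
    ∑ x : G, chi (L x) = 0 := by
  have key : ∑ x : G, chi (L x) = ∑ x : G, chi (L (x + x₁)) :=
    (Fintype.sum_equiv (Equiv.addRight x₁) _ _ (fun x => rfl)).symm
  have : ∀ x : G, chi (L (x + x₁)) = - chi (L x) := by
    intro x
    rw [hL, h1, chi_add]
    have : chi 1 = -1 := rfl
    rw [this]; ring
  rw [Finset.sum_congr rfl (fun x _ => this x), Finset.sum_neg_distrib] at key
  omega

variable (m : ℕ)

def Tr (m : ℕ) : GaloisField 2 m →ₗ[ZMod 2] ZMod 2 := Algebra.trace (ZMod 2) (GaloisField 2 m)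

lemma tr_sq (y : GaloisField 2 m) : Tr m (y ^ 2) = Tr m y := by
  have h2 : ∀ r : ZMod 2, (frobeniusEquiv (GaloisField 2 m) 2) (algebraMap (ZMod 2) (GaloisField 2 m) r)
      = algebraMap (ZMod 2) (GaloisField 2 m) r := by
    intro r; rw [frobeniusEquiv_def, ← map_pow, ZMod.pow_card]
  let e : GaloisField 2 m ≃ₐ[ZMod 2] GaloisField 2 m :=
    AlgEquiv.ofRingEquiv (f := frobeniusEquiv (GaloisField 2 m) 2) h2
  have := Algebra.trace_eq_of_algEquiv e y
  simpa [Tr, e, AlgEquiv.ofRingEquiv, frobeniusEquiv_def, frobenius_def] using this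

lemma tr_exists_ne : ∃ z : GaloisField 2 m, Tr m z ≠ 0 := by
  have h := Algebra.trace_ne_zero (ZMod 2) (GaloisField 2 m)
  rw [DFunLike.ne_iff] at h
  obtain ⟨z, hz⟩ := h
  exact ⟨z, by simpa [Tr] using hz⟩

/-- The Artin–Schreier map `y ↦ y² + y` as a linear map. -/
def AS (m : ℕ) : GaloisField 2 m →ₗ[ZMod 2] GaloisField 2 m where
  toFun y := y ^ 2 + y
  map_add' x y := by
    have h : (x + y) ^ 2 = x ^ 2 + y ^ 2 := CharTwo.add_sq x y
    show (x + y) ^ 2 + (x + y) = (x ^ 2 + x) + (y ^ 2 + y)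
    rw [h]; ring
  map_smul' r x := by
    rcases zmod2_cases r with rfl | rfl <;> simp

lemma tr_AS (y : GaloisField 2 m) : Tr m (AS m y) = 0 := by
  have : Tr m (y ^ 2 + y) = Tr m (y ^ 2) + Tr m y := map_add _ _ _
  rw [show AS m y = y ^ 2 + y from rfl, this, tr_sq]
  exact CharTwo.add_self_eq_zero _

lemma artin_schreier (hm : 0 < m) (t : GaloisField 2 m) (ht : Tr m t = 0) :
    ∃ y : GaloisField 2 m, y ^ 2 + y = t := by
  have hker : LinearMap.ker (AS m) = Submodule.span (ZMod 2) {(1 : GaloisField 2 m)} := by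
    ext y
    simp only [LinearMap.mem_ker, Submodule.mem_span_singleton]
    constructor
    · intro h
      have : y * (y + 1) = 0 := by
        have hAS : AS m y = y ^ 2 + y := rfl
        rw [hAS] at h; linear_combination h
      rcases mul_eq_zero.mp this with h0 | h1
      · exact ⟨0, by simp [h0]⟩
      · have h2 : (2 : GaloisField 2 m) = 0 := CharTwo.two_eq_zero
        exact ⟨1, by rw [one_smul]; linear_combination -h1 + h2⟩
    · rintro ⟨r, rfl⟩
      rcases zmod2_cases r with rfl | rfl <;> simp [AS, CharTwo.add_self_eq_zero]
  have hkerTr : LinearMap.range (AS m) ≤ LinearMap.ker (Tr m) := by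
    rintro x ⟨y, rfl⟩; exact tr_AS m y
  have hfinK : Module.finrank (ZMod 2) (GaloisField 2 m) = m := GaloisField.finrank 2 hm.ne'
  have hrTr : LinearMap.range (Tr m) = ⊤ := by
    obtain ⟨z, hz⟩ := tr_exists_ne m
    rw [LinearMap.range_eq_top]
    intro r
    rcases zmod2_cases r with rfl | rfl
    · exact ⟨0, map_zero _⟩
    · exact ⟨z, by simpa using zmod2_ne_zero hz⟩
  have h1 : Module.finrank (ZMod 2) (LinearMap.ker (Tr m)) = m - 1 := by
    have := LinearMap.finrank_range_add_finrank_ker (Tr m)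
    rw [hrTr, hfinK] at this
    simp [finrank_top] at this
    omega
  have h2 : Module.finrank (ZMod 2) (LinearMap.range (AS m)) = m - 1 := by
    have := LinearMap.finrank_range_add_finrank_ker (AS m)
    rw [hker, hfinK, finrank_span_singleton (one_ne_zero)] at this
    omega
  have heq := Submodule.eq_of_le_of_finrank_eq hkerTr (by rw [h1, h2])
  have hmem : t ∈ LinearMap.range (AS m) := by rw [heq]; exact ht
  obtain ⟨y, hy⟩ := hmem
  exact ⟨y, hy⟩

end VdGVVAux

/-- van der Geer–van der Vlugt: number of points of `y² + y = ax⁵ + bx³ + cx + d`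
(including the point at infinity) over `k = F_{2^m}`. -/
theorem stmt9 (m : ℕ) (hm : 0 < m) [Fintype (GaloisField 2 m)]
    (a b c d : GaloisField 2 m) (ha : a ≠ 0)
    (R : GaloisField 2 m → GaloisField 2 m)
    (hR : ∀ x, R x = a * x ^ 4 + b * x ^ 2 + c ^ 2 * x)
    (Q : GaloisField 2 m → ZMod 2)
    (hQ : ∀ x, Q x = Algebra.trace (ZMod 2) (GaloisField 2 m) (x * R x))
    (W : Submodule (ZMod 2) (GaloisField 2 m))
    (hW : ∀ x, x ∈ W ↔ ∀ y,
      Algebra.trace (ZMod 2) (GaloisField 2 m) (x * R y + y * R x) = 0)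
    (w : ℕ) (hw : w = Module.finrank (ZMod 2) W)
    (N : ℕ)
    (hN : N = 1 + (Finset.univ.filter
      (fun p : GaloisField 2 m × GaloisField 2 m =>
        p.2 ^ 2 + p.2 = a * p.1 ^ 5 + b * p.1 ^ 3 + c * p.1 + d)).card) :
    ((∃ x ∈ W, Q x ≠ 0) → (N : ℝ) = 1 + 2 ^ m) ∧
    ((∀ x ∈ W, Q x = 0) →
      (N : ℝ) = 1 + 2 ^ m + Real.sqrt (2 ^ w * 2 ^ m) ∨
      (N : ℝ) = 1 + 2 ^ m - Real.sqrt (2 ^ w * 2 ^ m)) := by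
  have h2K : (2 : GaloisField 2 m) = 0 := CharTwo.two_eq_zero
  have h2Z : (2 : ZMod 2) = 0 := by decide
  have hcard : Fintype.card (GaloisField 2 m) = 2 ^ m := by
    rw [← Nat.card_eq_fintype_card]; exact GaloisField.card 2 m hm.ne'
  have hQTr : ∀ x, Q x = Tr m (x * R x) := fun x => hQ x
  have hWTr : ∀ x, x ∈ W ↔ ∀ y, Tr m (x * R y + y * R x) = 0 := fun x => hW x
  -- additivity of R
  have hRadd : ∀ x y : GaloisField 2 m, R (x + y) = R x + R y := by
    intro x y
    have hsq : (x + y) ^ 2 = x ^ 2 + y ^ 2 := CharTwo.add_sq x y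
    have h4 : (x + y) ^ 4 = x ^ 4 + y ^ 4 := by
      have h : (x + y) ^ 4 = ((x + y) ^ 2) ^ 2 := by ring
      rw [h, hsq, CharTwo.add_sq]; ring
    rw [hR, hR, hR, hsq, h4]; ring
  -- the bilinear form
  set B : GaloisField 2 m → GaloisField 2 m → ZMod 2 :=
    fun x y => Tr m (x * R y + y * R x) with hB
  have hQadd : ∀ x y : GaloisField 2 m, Q (x + y) = Q x + Q y + B x y := by
    intro x y
    have hexp : (x + y) * R (x + y) = x * R x + y * R y + (x * R y + y * R x) := by
      rw [hRadd]; ring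
    simp only [hB]
    rw [hQTr, hexp, map_add, map_add, ← hQTr, ← hQTr]
  have hBadd : ∀ h x y : GaloisField 2 m, B (x + y) h = B x h + B y h := by
    intro h x y
    have hexp : (x + y) * R h + h * R (x + y)
        = (x * R h + h * R x) + (y * R h + h * R y) := by rw [hRadd]; ring
    simp only [hB]
    rw [hexp, map_add]
  have hBW : ∀ h ∈ W, ∀ x : GaloisField 2 m, B x h = 0 := by
    intro h hh x
    have hx := (hWTr h).mp hh x
    simp only [hB]
    rw [add_comm]; exact hx
  -- inner character sum
  have hinner : ∀ h : GaloisField 2 m,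
      ∑ x : GaloisField 2 m, chi (B x h) = if h ∈ W then (2 ^ m : ℤ) else 0 := by
    intro h
    by_cases hh : h ∈ W
    · simp only [hh, if_true]
      have hc : ∀ x : GaloisField 2 m, chi (B x h) = 1 := fun x => by
        rw [hBW h hh x, chi_zero]
      rw [Finset.sum_congr rfl (fun x _ => hc x), Finset.sum_const, Finset.card_univ, hcard]
      simp
    · simp only [hh, if_false]
      have hex : ∃ y : GaloisField 2 m, Tr m (h * R y + y * R h) ≠ 0 := by
        by_contra hc
        push_neg at hc
        exact hh ((hWTr h).mpr hc)
      obtain ⟨y, hy⟩ := hex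
      have hy1 : B y h = 1 := by
        apply zmod2_ne_zero
        simp only [hB]
        rwa [add_comm]
      exact sum_chi_shift (fun x => B x h) (hBadd h) y hy1
  -- the quadratic character sum
  set SQ : ℤ := ∑ x : GaloisField 2 m, chi (Q x) with hSQ
  set SW : ℤ := ∑ h : {x : GaloisField 2 m // x ∈ W}, chi (Q h.val) with hSW
  have hSQ2 : SQ ^ 2 = 2 ^ m * SW := by
    have step1 : SQ ^ 2 = ∑ x : GaloisField 2 m, ∑ y : GaloisField 2 m,
        chi (Q x) * chi (Q y) := by
      rw [sq, hSQ, Finset.sum_mul_sum]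
    have step2 : ∀ x : GaloisField 2 m, ∑ y : GaloisField 2 m, chi (Q x) * chi (Q y)
        = ∑ h : GaloisField 2 m, chi (Q h) * chi (B x h) := by
      intro x
      have he := Fintype.sum_equiv (Equiv.addLeft x)
        (fun h : GaloisField 2 m => chi (Q x) * chi (Q (x + h)))
        (fun y : GaloisField 2 m => chi (Q x) * chi (Q y))
        (fun h => rfl)
      rw [← he]
      refine Finset.sum_congr rfl (fun h _ => ?_)
      show chi (Q x) * chi (Q (x + h)) = chi (Q h) * chi (B x h)
      rw [← chi_add, ← chi_add]
      congr 1
      rw [hQadd x h]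
      linear_combination (Q x) * h2Z
    have step3 : SQ ^ 2 = ∑ h : GaloisField 2 m, chi (Q h) * ∑ x : GaloisField 2 m,
        chi (B x h) := by
      rw [step1, Finset.sum_congr rfl (fun x _ => step2 x), Finset.sum_comm]
      exact Finset.sum_congr rfl (fun h _ => by rw [Finset.mul_sum])
    rw [step3]
    have hsplit : ∀ h : GaloisField 2 m, chi (Q h) * ∑ x : GaloisField 2 m, chi (B x h)
        = if h ∈ W then 2 ^ m * chi (Q h) else 0 := by
      intro h
      rw [hinner h]
      by_cases hh : h ∈ W <;> simp [hh, mul_comm]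
    rw [Finset.sum_congr rfl (fun h _ => hsplit h), Finset.sum_ite, Finset.sum_const_zero,
      add_zero, ← Finset.mul_sum, hSW]
    congr 1
    exact Finset.sum_subtype (Finset.univ.filter (· ∈ W)) (fun x => by simp)
      (fun x => chi (Q x))
  -- point counting per fiber
  have percard : ∀ t : GaloisField 2 m,
      (Finset.univ.filter (fun y : GaloisField 2 m => y ^ 2 + y = t)).card
      = if Tr m t = 0 then 2 else 0 := by
    intro t
    by_cases ht : Tr m t = 0
    · simp only [ht, if_true]
      obtain ⟨y₀, hy₀⟩ := artin_schreier m hm t ht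
      have hset : Finset.univ.filter (fun y : GaloisField 2 m => y ^ 2 + y = t)
          = {y₀, y₀ + 1} := by
        ext y
        simp only [Finset.mem_filter, Finset.mem_univ, true_and, Finset.mem_insert,
          Finset.mem_singleton]
        constructor
        · intro h
          have hz : (y + y₀) * (y + y₀ + 1) = 0 := by
            have hyy : y ^ 2 + y = y₀ ^ 2 + y₀ := by rw [h, hy₀]
            linear_combination hyy + (y * y₀ + y₀ ^ 2 + y₀) * h2K
          rcases mul_eq_zero.mp hz with h0 | h1
          · left; linear_combination h0 - y₀ * h2K
          · right; linear_combination h1 - (y₀ + 1) * h2K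
        · rintro (rfl | rfl)
          · exact hy₀
          · rw [← hy₀]; linear_combination (y₀ + 1) * h2K
      rw [hset, Finset.card_insert_of_notMem (by simp), Finset.card_singleton]
    · simp only [ht, if_false]
      rw [Finset.card_eq_zero, Finset.filter_eq_empty_iff]
      intro y _ hy
      apply ht
      rw [← hy]
      exact tr_AS m y
  set rhs : GaloisField 2 m → GaloisField 2 m :=
    fun x => a * x ^ 5 + b * x ^ 3 + c * x + d with hrhs
  set n₀ : ℕ := (Finset.univ.filter
    (fun x : GaloisField 2 m => Tr m (rhs x) = 0)).card with hn₀
  have hNcount : N = 1 + 2 * n₀ := by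
    rw [hN]
    congr 1
    have hc : (Finset.univ.filter
        (fun p : GaloisField 2 m × GaloisField 2 m =>
          p.2 ^ 2 + p.2 = a * p.1 ^ 5 + b * p.1 ^ 3 + c * p.1 + d)).card
        = ∑ x : GaloisField 2 m,
          (Finset.univ.filter (fun y : GaloisField 2 m => y ^ 2 + y = rhs x)).card := by
      rw [Finset.card_filter, Fintype.sum_prod_type]
      exact Finset.sum_congr rfl (fun x _ => by rw [Finset.card_filter])
    rw [hc, Finset.sum_congr rfl (fun x _ => percard (rhs x)), Finset.sum_ite,
      Finset.sum_const, Finset.sum_const]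
    simp [hn₀, mul_comm]
  -- trace of rhs vs Q
  have htrrhs : ∀ x : GaloisField 2 m, Tr m (rhs x) = Q x + Tr m d := by
    intro x
    have hid : rhs x = x * R x + ((c * x) ^ 2 + c * x) + d := by
      simp only [hrhs, hR]
      linear_combination (-(c ^ 2 * x ^ 2)) * h2K
    rw [hid, map_add, map_add, ← hQTr]
    have hcx : Tr m ((c * x) ^ 2 + c * x) = 0 := tr_AS m (c * x)
    rw [hcx, add_zero]
  -- character sum identity
  have hchar : (2 * (n₀ : ℤ) - 2 ^ m) = chi (Tr m d) * SQ := by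
    have h1 : ∑ x : GaloisField 2 m, chi (Tr m (rhs x)) = chi (Tr m d) * SQ := by
      rw [hSQ, Finset.mul_sum]
      refine Finset.sum_congr rfl (fun x _ => ?_)
      rw [htrrhs x, chi_add, mul_comm]
    have h2 : ∑ x : GaloisField 2 m, chi (Tr m (rhs x)) = 2 * (n₀ : ℤ) - 2 ^ m := by
      have hx : ∀ x : GaloisField 2 m, chi (Tr m (rhs x))
          = if Tr m (rhs x) = 0 then (1 : ℤ) else -1 := fun x => rfl
      have hsplit := Finset.card_filter_add_card_filter_not
        (s := (Finset.univ : Finset (GaloisField 2 m)))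
        (p := fun x => Tr m (rhs x) = 0)
      rw [Finset.card_univ, hcard] at hsplit
      have hneg : (Finset.univ.filter
          (fun x : GaloisField 2 m => ¬ Tr m (rhs x) = 0)).card = 2 ^ m - n₀ := by
        omega
      have hle : n₀ ≤ 2 ^ m := by omega
      rw [Finset.sum_congr rfl (fun x _ => hx x), Finset.sum_ite, Finset.sum_const,
        Finset.sum_const, hneg, ← hn₀, nsmul_eq_mul, nsmul_eq_mul, Nat.cast_sub hle]
      push_cast
      ring
    linarith [h1, h2]
  have hEps : chi (Tr m d) = 1 ∨ chi (Tr m d) = -1 := by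
    unfold chi; split <;> simp
  constructor
  · -- case V ≠ W
    rintro ⟨x, hxW, hxQ⟩
    have hSW0 : SW = 0 := by
      have haddW : ∀ g h : {x : GaloisField 2 m // x ∈ W},
          Q ((g + h : {x : GaloisField 2 m // x ∈ W})).val = Q g.val + Q h.val := by
        intro g h
        have hcoe : ((g + h : {x : GaloisField 2 m // x ∈ W}) : GaloisField 2 m)
            = g.val + h.val := rfl
        rw [hcoe, hQadd, hBW h.val h.property g.val, add_zero]
      exact sum_chi_shift (fun h : {x : GaloisField 2 m // x ∈ W} => Q h.val) haddW
        ⟨x, hxW⟩ (zmod2_ne_zero hxQ)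
    have hsq0 : SQ ^ 2 = 0 := by rw [hSQ2, hSW0, mul_zero]
    have hSQ0 : SQ = 0 := by
      exact sq_eq_zero_iff.mp hsq0
    have h2n : 2 * (n₀ : ℤ) = 2 ^ m := by
      rw [hSQ0, mul_zero] at hchar
      linarith [hchar]
    have h2n' : 2 * n₀ = 2 ^ m := by exact_mod_cast h2n
    rw [hNcount, h2n']
    push_cast
    ring
  · -- case V = W
    intro hQW
    have hSWcard : SW = 2 ^ w := by
      have hone : ∀ h : {x : GaloisField 2 m // x ∈ W}, chi (Q h.val) = 1 := by
        intro h
        rw [hQW h.val h.property, chi_zero]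
      rw [hSW, Finset.sum_congr rfl (fun h _ => hone h), Finset.sum_const]
      have hcardW : Fintype.card {x : GaloisField 2 m // x ∈ W} = 2 ^ w := by
        rw [hw]
        have hc := Module.card_eq_pow_finrank (K := ZMod 2) (V := W)
        rw [ZMod.card] at hc
        exact hc
      simp [Finset.card_univ, hcardW]
    set Sε : ℤ := chi (Tr m d) * SQ with hSε
    have hSε2 : Sε ^ 2 = 2 ^ m * 2 ^ w := by
      rw [hSε, mul_pow, hSQ2, hSWcard]
      rcases hEps with h | h <;> rw [h] <;> ring
    have hNval : (N : ℝ) = 1 + 2 ^ m + (Sε : ℝ) := by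
      have h1 : (N : ℤ) = 1 + 2 ^ m + Sε := by
        rw [hNcount]
        push_cast
        linarith [hchar]
      have h2 := congrArg (fun z : ℤ => (z : ℝ)) h1
      push_cast at h2
      linarith [h2]
    have hcastSε : ((Sε : ℝ)) ^ 2 = 2 ^ m * 2 ^ w := by exact_mod_cast hSε2
    have hsqrt : Real.sqrt (2 ^ w * 2 ^ m) = |(Sε : ℝ)| := by
      rw [← Real.sqrt_sq_eq_abs]
      congr 1
      rw [hcastSε]
      ring
    rcases le_or_gt 0 (Sε : ℝ) with hpos | hneg
    · left
      rw [hNval, hsqrt, abs_of_nonneg hpos]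
    · right
      rw [hNval, hsqrt, abs_of_neg hneg]
      ring
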